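/- Let f₁, ..., f_m : 2^V → ℝ≥0 be monotone submodular. At any state (S_tr, S₁, ..., S_m) of the randomized meta-greedy algorithm with |S_tr| < l and |Sᵢ| < k-l for all i, the following holds: (1/k) Σᵢ [fᵢ(S_tr* ∪ Sᵢ*) - fᵢ(S_tr ∪ Sᵢ)] ≤ (l/k) max_e Σᵢ Δᵢ(e | S_tr ∪ Sᵢ) + ((k-l)/k) Σᵢ max_e Δᵢ(e | S_tr ∪ Sᵢ), where S_tr* has size at most l and each Sᵢ* has size at most k-l, and Δᵢ(e|S) = fᵢ(S ∪ {e}) - fᵢ(S). -/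
import Mathlib


open Finset

def Submodular {V : Type*} [DecidableEq V] (f : Finset V → ℝ) : Prop :=
  ∀ A B : Finset V, f (A ∪ B) + f (A ∩ B) ≤ f A + f B

def MonotoneSet {V : Type*} (f : Finset V → ℝ) : Prop :=
  ∀ A B : Finset V, A ⊆ B → f A ≤ f B

lemma marg_sum {V : Type*} [DecidableEq V] (f : Finset V → ℝ)
    (hsub : Submodular f) (hmono : MonotoneSet f) (S T : Finset V) :
    f (S ∪ T) ≤ f S + ∑ e ∈ T, (f (insert e S) - f S) := by
  induction T using Finset.induction_on with
  | empty => simp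
  | @insert a T' ha ih =>
    have h1 : S ∪ insert a T' = (S ∪ T') ∪ insert a S := by
      ext x; simp [Finset.mem_insert, Finset.mem_union]; tauto
    have h2 := hsub (S ∪ T') (insert a S)
    have h3 : S ⊆ (S ∪ T') ∩ insert a S := by
      intro x hx; simp [Finset.mem_inter, Finset.mem_union, hx]
    have h4 := hmono _ _ h3
    rw [Finset.sum_insert ha]
    have : f (S ∪ insert a T') ≤ f (S ∪ T') + f (insert a S) - f S := by
      rw [h1]; linarith
    linarith

/-- per-step expected-gain inequality of the randomized
meta-greedy algorithm (equations (53)-(55) of the paper). -/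
theorem randomized_step_inequality {V : Type*} [Fintype V] [DecidableEq V]
    [Nonempty V] (m k l : ℕ) (hl : 0 < l) (hlk : l < k)
    (f : Fin m → Finset V → ℝ)
    (hnonneg : ∀ i S, 0 ≤ f i S)
    (hsub : ∀ i, Submodular (f i)) (hmono : ∀ i, MonotoneSet (f i))
    (Str : Finset V) (S : Fin m → Finset V)
    (hStr : Str.card < l) (hS : ∀ i, (S i).card < k - l)
    (Strstar : Finset V) (hStrstar : Strstar.card ≤ l)
    (Sistar : Fin m → Finset V) (hSistar : ∀ i, (Sistar i).card ≤ k - l) :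
    (1 / (k : ℝ)) * ∑ i, (f i (Strstar ∪ Sistar i) - f i (Str ∪ S i)) ≤
      ((l : ℝ) / k) *
        (Finset.univ.sup' Finset.univ_nonempty fun e =>
          ∑ i, (f i (insert e (Str ∪ S i)) - f i (Str ∪ S i))) +
      (((k : ℝ) - l) / k) *
        ∑ i, (Finset.univ.sup' Finset.univ_nonempty fun e =>
          f i (insert e (Str ∪ S i)) - f i (Str ∪ S i)) := by
  have hk : (0:ℝ) < k := by exact_mod_cast hl.trans hlk
  set Δ : Fin m → V → ℝ := fun i e => f i (insert e (Str ∪ S i)) - f i (Str ∪ S i)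
    with hΔdef
  have hΔ0 : ∀ i e, 0 ≤ Δ i e := fun i e =>
    sub_nonneg.2 (hmono i _ _ (Finset.subset_insert _ _))
  set A : ℝ := Finset.univ.sup' Finset.univ_nonempty (fun e => ∑ i, Δ i e) with hA
  set B : Fin m → ℝ := fun i => Finset.univ.sup' Finset.univ_nonempty (Δ i) with hB
  have hA0 : 0 ≤ A := by
    obtain ⟨e⟩ := (inferInstance : Nonempty V)
    exact le_trans (Finset.sum_nonneg fun i _ => hΔ0 i e)
      (Finset.le_sup' (fun e => ∑ i, Δ i e) (Finset.mem_univ e))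
  have hB0 : ∀ i, 0 ≤ B i := fun i => by
    obtain ⟨e⟩ := (inferInstance : Nonempty V)
    exact le_trans (hΔ0 i e) (Finset.le_sup' _ (Finset.mem_univ e))
  -- per-i bound
  have key : ∀ i, f i (Strstar ∪ Sistar i) - f i (Str ∪ S i) ≤
      (∑ e ∈ Strstar, Δ i e) + ∑ e ∈ Sistar i, Δ i e := by
    intro i
    have hm : f i (Strstar ∪ Sistar i) ≤ f i ((Str ∪ S i) ∪ (Strstar ∪ Sistar i)) :=
      hmono i _ _ (Finset.subset_union_right)
    have hs := marg_sum (f i) (hsub i) (hmono i) (Str ∪ S i) (Strstar ∪ Sistar i)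
    have hsplit : ∑ e ∈ Strstar ∪ Sistar i, Δ i e ≤
        (∑ e ∈ Strstar, Δ i e) + ∑ e ∈ Sistar i, Δ i e := by
      have := Finset.sum_union_inter (s₁ := Strstar) (s₂ := Sistar i) (f := Δ i)
      have hnn : 0 ≤ ∑ e ∈ Strstar ∩ Sistar i, Δ i e :=
        Finset.sum_nonneg fun e _ => hΔ0 i e
      linarith
    calc f i (Strstar ∪ Sistar i) - f i (Str ∪ S i)
        ≤ ∑ e ∈ Strstar ∪ Sistar i, Δ i e := by
          simp only [hΔdef] at hs ⊢; linarith
      _ ≤ _ := hsplit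
  have bound1 : ∑ i, ∑ e ∈ Strstar, Δ i e ≤ (l : ℝ) * A := by
    rw [Finset.sum_comm]
    calc ∑ e ∈ Strstar, ∑ i, Δ i e ≤ ∑ _e ∈ Strstar, A :=
          Finset.sum_le_sum fun e _ =>
            Finset.le_sup' (fun e => ∑ i, Δ i e) (Finset.mem_univ e)
      _ = Strstar.card * A := by rw [Finset.sum_const, nsmul_eq_mul]
      _ ≤ (l : ℝ) * A := by
          apply mul_le_mul_of_nonneg_right _ hA0
          exact_mod_cast hStrstar
  have bound2 : ∑ i, ∑ e ∈ Sistar i, Δ i e ≤ ((k : ℝ) - l) * ∑ i, B i := by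
    have hkl : ((k - l : ℕ) : ℝ) = (k : ℝ) - l := by
      rw [Nat.cast_sub hlk.le]
    calc ∑ i, ∑ e ∈ Sistar i, Δ i e ≤ ∑ i, ((k : ℝ) - l) * B i := by
          apply Finset.sum_le_sum
          intro i _
          calc ∑ e ∈ Sistar i, Δ i e ≤ ∑ _e ∈ Sistar i, B i :=
                Finset.sum_le_sum fun e _ => Finset.le_sup' _ (Finset.mem_univ e)
            _ = (Sistar i).card * B i := by rw [Finset.sum_const, nsmul_eq_mul]
            _ ≤ ((k : ℝ) - l) * B i := by
                apply mul_le_mul_of_nonneg_right _ (hB0 i)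
                rw [← hkl]; exact_mod_cast hSistar i
      _ = ((k : ℝ) - l) * ∑ i, B i := by rw [Finset.mul_sum]
  have total : ∑ i, (f i (Strstar ∪ Sistar i) - f i (Str ∪ S i)) ≤
      (l : ℝ) * A + ((k : ℝ) - l) * ∑ i, B i := by
    calc ∑ i, (f i (Strstar ∪ Sistar i) - f i (Str ∪ S i))
        ≤ ∑ i, ((∑ e ∈ Strstar, Δ i e) + ∑ e ∈ Sistar i, Δ i e) :=
          Finset.sum_le_sum fun i _ => key i
      _ = (∑ i, ∑ e ∈ Strstar, Δ i e) + ∑ i, ∑ e ∈ Sistar i, Δ i e :=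
          Finset.sum_add_distrib
      _ ≤ _ := add_le_add bound1 bound2
  have h1k : (0:ℝ) ≤ 1 / (k:ℝ) := by positivity
  calc (1 / (k : ℝ)) * ∑ i, (f i (Strstar ∪ Sistar i) - f i (Str ∪ S i))
      ≤ (1 / (k : ℝ)) * ((l : ℝ) * A + ((k : ℝ) - l) * ∑ i, B i) :=
        mul_le_mul_of_nonneg_left total h1k
    _ = ((l : ℝ) / k) * A + (((k : ℝ) - l) / k) * ∑ i, B i := by
        field_simp
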